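/- The identity (A(B⁺A)*)⁺B = A⁺B holds in every adequate monoid. -/

import Mathlib

/-- `a 𝓡* b` in a monoid `M`: for all `x, y ∈ M`, `x a = y a ↔ x b = y b`. -/
def RStarM {M : Type*} [Monoid M] (a b : M) : Prop :=
  ∀ x y : M, x * a = y * a ↔ x * b = y * b

/-- `a 𝓛* b` in a monoid `M`: for all `x, y ∈ M`, `a x = a y ↔ b x = b y`. -/
def LStarM {M : Type*} [Monoid M] (a b : M) : Prop :=
  ∀ x y : M, a * x = a * y ↔ b * x = b * y

/-- A witness that the monoid `M` is adequate: each element `a` has an idempotent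
`plus a` in its `𝓡*`-class and an idempotent `star a` in its `𝓛*`-class, and
idempotents commute. -/
structure AdequateMonoid (M : Type*) [Monoid M] where
  plus : M → M
  star : M → M
  plus_idem : ∀ a : M, IsIdempotentElem (plus a)
  star_idem : ∀ a : M, IsIdempotentElem (star a)
  plus_rstar : ∀ a : M, RStarM a (plus a)
  star_lstar : ∀ a : M, LStarM a (star a)
  idem_comm : ∀ e f : M, IsIdempotentElem e → IsIdempotentElem f → e * f = f * e

namespace AdequateMonoid

variable {M : Type*} [Monoid M]

/-- `a⁺ a = a`. -/
lemma plus_mul (D : AdequateMonoid M) (a : M) : D.plus a * a = a := by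
  have h := (D.plus_rstar a (D.plus a) 1).mpr
  simpa using h (by simpa using (D.plus_idem a).eq)

/-- `a a* = a`. -/
lemma mul_star (D : AdequateMonoid M) (a : M) : a * D.star a = a := by
  have h := (D.star_lstar a (D.star a) 1).mpr
  simpa using h (by simpa using (D.star_idem a).eq)

/-- Product of (commuting) idempotents is idempotent. -/
lemma idem_mul (D : AdequateMonoid M) {e f : M} (he : IsIdempotentElem e) (hf : IsIdempotentElem f) :
    IsIdempotentElem (e * f) := by
  unfold IsIdempotentElem
  calc e * f * (e * f) = e * (f * e) * f := by noncomm_ring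
    _ = e * (e * f) * f := by rw [D.idem_comm e f he hf]
    _ = (e * e) * (f * f) := by noncomm_ring
    _ = e * f := by rw [he, hf]

/-- Two commuting idempotents that are `𝓡*`-related are equal. -/
lemma idem_rstar_eq (D : AdequateMonoid M) {e f : M} (he : IsIdempotentElem e) (hf : IsIdempotentElem f)
    (h : RStarM e f) : e = f := by
  have h1 : e * f = f := by
    have := (h e 1).mp (by simpa using he.eq)
    simpa using this
  have h2 : f * e = e := by
    have := (h f 1).mpr (by simpa using hf.eq)
    simpa using this
  rw [← h2, ← D.idem_comm e f he hf]; exact h1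

end AdequateMonoid

/-- The identity `(A (B⁺ A)*)⁺ B = A⁺ B` holds in every adequate monoid. -/
theorem adequate_identity {M : Type*} [Monoid M] (D : AdequateMonoid M) (A B : M) :
    D.plus (A * D.star (D.plus B * A)) * B = D.plus A * B := by
  set e := D.plus B with he_def
  set C := D.star (e * A) with hC_def
  set X := A * C with hX_def
  have he : IsIdempotentElem e := D.plus_idem B
  have hXp : IsIdempotentElem (D.plus X) := D.plus_idem X
  have hAp : IsIdempotentElem (D.plus A) := D.plus_idem A
  -- e * X = e * A
  have heX : e * X = e * A := by
    rw [hX_def, ← mul_assoc, D.mul_star (e * A)]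
  -- e * X⁺ and e * A⁺ are R*-related
  have hrel : RStarM (e * D.plus X) (e * D.plus A) := by
    intro u v
    have h1 : u * (e * D.plus X) = v * (e * D.plus X) ↔ u * e * X = v * e * X := by
      rw [← mul_assoc, ← mul_assoc]
      exact (D.plus_rstar X (u * e) (v * e)).symm
    have h2 : u * e * X = v * e * X ↔ u * e * A = v * e * A := by
      rw [mul_assoc, mul_assoc, heX, ← mul_assoc, ← mul_assoc]
    have h3 : u * e * A = v * e * A ↔ u * (e * D.plus A) = v * (e * D.plus A) := by
      rw [← mul_assoc, ← mul_assoc]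
      exact D.plus_rstar A (u * e) (v * e)
    exact h1.trans (h2.trans h3)
  have hkey : e * D.plus X = e * D.plus A :=
    D.idem_rstar_eq (D.idem_mul he hXp) (D.idem_mul he hAp) hrel
  calc D.plus X * B = D.plus X * (e * B) := by rw [D.plus_mul B]
    _ = D.plus X * e * B := by rw [mul_assoc]
    _ = e * D.plus X * B := by rw [D.idem_comm _ _ hXp he]
    _ = e * D.plus A * B := by rw [hkey]
    _ = D.plus A * e * B := by rw [D.idem_comm _ _ he hAp]
    _ = D.plus A * (e * B) := by rw [mul_assoc]
    _ = D.plus A * B := by rw [D.plus_mul B]
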